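/- arXiv:2107.03130 — 4 statements merged into one kernel-verified Lean document; each statement's English description precedes it below -/
import Mathlib

section
/- If f : X → X is a weak contraction on a metric space X with compact image closure, then for all y, z ∈ X, d(f^n(y), f^n(z)) → 0 as n → ∞. -/
open Filter Topology

set_option maxHeartbeats 1000000 in
/-- If `f : X → X` is a weak contraction on a compact metric space `X`, then for all
`y, z ∈ X`, `d(f^[n] y, f^[n] z) → 0` as `n → ∞`. -/
theorem weak_contraction_orbits_approach
    {X : Type*} [MetricSpace X] [CompactSpace X]
    (f : X → X) (hf : ∀ x y : X, x ≠ y → dist (f x) (f y) < dist x y) :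
    ∀ y z : X, Tendsto (fun n => dist (f^[n] y) (f^[n] z)) atTop (𝓝 0) := by
  have hle : ∀ x y : X, dist (f x) (f y) ≤ dist x y := by
    intro x y
    rcases eq_or_ne x y with rfl | h
    · simp
    · exact (hf x y h).le
  have hcont : Continuous f :=
    (LipschitzWith.of_dist_le_mul (K := 1) (by intro x y; simpa using hle x y)).continuous
  intro y z
  set a : ℕ → ℝ := fun n => dist (f^[n] y) (f^[n] z) with ha
  have hanti : Antitone a := antitone_nat_of_succ_le fun n => by
    simp only [ha, Function.iterate_succ_apply']
    exact hle _ _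
  have h0 : ∀ n, 0 ≤ a n := fun n => dist_nonneg
  have hbdd : BddBelow (Set.range a) := ⟨0, by rintro _ ⟨n, rfl⟩; exact h0 n⟩
  set L := ⨅ n, a n with hL
  have htend : Tendsto a atTop (𝓝 L) := tendsto_atTop_ciInf hanti hbdd
  have hL0 : 0 ≤ L := le_ciInf h0
  rcases eq_or_lt_of_le hL0 with h | h
  · rw [← h] at htend; exact htend
  · exfalso
    obtain ⟨p, -, φ, hφ, hptend⟩ := isCompact_univ.tendsto_subseq
      (x := fun n => ((f^[n] y, f^[n] z) : X × X)) (fun n => Set.mem_univ _)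
    have hy1 : Tendsto (fun k => f^[φ k] y) atTop (𝓝 p.1) :=
      ((continuous_fst.tendsto p).comp hptend)
    have hz1 : Tendsto (fun k => f^[φ k] z) atTop (𝓝 p.2) :=
      ((continuous_snd.tendsto p).comp hptend)
    have h1 : Tendsto (fun k => a (φ k)) atTop (𝓝 (dist p.1 p.2)) := hy1.dist hz1
    have h1' : Tendsto (fun k => a (φ k)) atTop (𝓝 L) := htend.comp hφ.tendsto_atTop
    have heq : dist p.1 p.2 = L := tendsto_nhds_unique h1 h1'
    have hne : p.1 ≠ p.2 := by
      intro hpe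
      rw [hpe, dist_self] at heq
      exact absurd heq.symm h.ne'
    have hlt : dist (f p.1) (f p.2) < L := by rw [← heq]; exact hf p.1 p.2 hne
    have h2 : Tendsto (fun k => a (φ k + 1)) atTop (𝓝 (dist (f p.1) (f p.2))) := by
      have := ((hcont.tendsto p.1).comp hy1).dist ((hcont.tendsto p.2).comp hz1)
      simpa [ha, Function.iterate_succ_apply'] using this
    have hφ1 : Tendsto (fun k => φ k + 1) atTop atTop :=
      tendsto_atTop_mono (fun k => Nat.le_succ (φ k)) hφ.tendsto_atTop
    have h2' : Tendsto (fun k => a (φ k + 1)) atTop (𝓝 L) := htend.comp hφ1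
    exact hlt.ne (tendsto_nhds_unique h2 h2')
end

section
/- Let G(ω, x) = (σω, g_ω(x)) be a skew product over an invertible ergodic measure-preserving system (Σ, ν, σ) with fiber I = [0,1], where each g_ω : I → I is Lipschitz. Suppose there exist λ < 0 and a measurable function C : Σ → ℝ⁺ such that ‖g^n(σ^{-n}ω, ·)‖ ≤ C(ω) e^{λ n} for ν-a.e. ω and all n ≥ 1, where g^n(ω, x) = g_{σ^{n−1}ω}(⋯ g_ω(x)⋯) and ‖·‖ is the Lipschitz seminorm, and suppose sup_ω sup_x |x − g_ω(x)| < ∞. Then for ν-a.e. ω and every x ∈ I, the sequence h_n(ω, x) := g^n(σ^{-n}ω, x) is Cauchy. -/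
open Set Filter Topology MeasureTheory

/-- Lipschitz seminorm of a map, computed over the unit interval `I = [0,1]`. -/
noncomputable def lipSemi (f : ℝ → ℝ) : ℝ :=
  sSup {r : ℝ | ∃ x ∈ Icc (0:ℝ) 1, ∃ y ∈ Icc (0:ℝ) 1, x ≠ y ∧ r = |f x - f y| / |x - y|}

/-- Fiber compositions `g^n(ω, x) = g_{σ^{n−1}ω}(⋯ g_ω(x)⋯)` of a skew product over
an (abstract) base transformation `σ`. -/
def gIter {S : Type*} (σ : S → S) (g : S → ℝ → ℝ) : ℕ → S → ℝ → ℝ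
  | 0, _, x => x
  | n + 1, ω, x => gIter σ g n (σ ω) (g ω x)

lemma gIter_mapsTo {S : Type*} (σ : S → S) (g : S → ℝ → ℝ)
    (hmaps : ∀ ω, MapsTo (g ω) (Icc (0:ℝ) 1) (Icc (0:ℝ) 1)) :
    ∀ n ω, MapsTo (gIter σ g n ω) (Icc (0:ℝ) 1) (Icc (0:ℝ) 1) := by
  intro n
  induction n with
  | zero => intro ω x hx; exact hx
  | succ n ih => intro ω x hx; exact ih (σ ω) (hmaps ω hx)

lemma gIter_lip {S : Type*} (σ : S → S) (g : S → ℝ → ℝ)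
    (hLip : ∀ ω, ∃ L : NNReal, LipschitzOnWith L (g ω) (Icc (0:ℝ) 1))
    (hmaps : ∀ ω, MapsTo (g ω) (Icc (0:ℝ) 1) (Icc (0:ℝ) 1)) :
    ∀ n ω, ∃ L : NNReal, LipschitzOnWith L (gIter σ g n ω) (Icc (0:ℝ) 1) := by
  intro n
  induction n with
  | zero => intro ω; exact ⟨1, LipschitzWith.id.lipschitzOnWith⟩
  | succ n ih =>
    intro ω
    obtain ⟨L1, hL1⟩ := ih (σ ω)
    obtain ⟨L2, hL2⟩ := hLip ω
    exact ⟨L1 * L2, hL1.comp hL2 (hmaps ω)⟩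

lemma lipSemi_bound (f : ℝ → ℝ) (L : NNReal) (hf : LipschitzOnWith L f (Icc (0:ℝ) 1))
    (B : ℝ) (hB : lipSemi f ≤ B)
    {x y : ℝ} (hx : x ∈ Icc (0:ℝ) 1) (hy : y ∈ Icc (0:ℝ) 1) :
    |f x - f y| ≤ B * |x - y| := by
  rcases eq_or_ne x y with rfl | hne
  · simp
  · have hbdd : BddAbove {r : ℝ | ∃ x ∈ Icc (0:ℝ) 1, ∃ y ∈ Icc (0:ℝ) 1,
        x ≠ y ∧ r = |f x - f y| / |x - y|} := by
      refine ⟨L, ?_⟩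
      rintro r ⟨a, ha, b, hb, hab, rfl⟩
      have h1 : |f a - f b| ≤ L * |a - b| := by
        simpa [Real.dist_eq] using hf.dist_le_mul a ha b hb
      rw [div_le_iff₀ (abs_pos.mpr (sub_ne_zero.mpr hab))]
      exact h1
    have hmem : |f x - f y| / |x - y| ∈ {r : ℝ | ∃ x ∈ Icc (0:ℝ) 1, ∃ y ∈ Icc (0:ℝ) 1,
        x ≠ y ∧ r = |f x - f y| / |x - y|} := ⟨x, hx, y, hy, hne, rfl⟩
    have := (le_csSup hbdd hmem).trans hB
    have hxy : (0:ℝ) < |x - y| := abs_pos.mpr (sub_ne_zero.mpr hne)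
    calc |f x - f y| = |f x - f y| / |x - y| * |x - y| := by field_simp
    _ ≤ B * |x - y| := by gcongr

example : True := trivial

/-- Pullback Cauchy lemma: if the Lipschitz seminorms of the pullback compositions
decay exponentially, `‖g^n(σ^{-n}ω, ·)‖ ≤ C(ω) e^{λn}` with `λ < 0`, and
`sup_ω sup_x |x − g_ω(x)|` is finite, then for a.e. `ω` and every `x ∈ I` the pullback
sequence `h_n(ω, x) = g^n(σ^{-n}ω, x)` is Cauchy. -/
theorem pullback_iterates_cauchy
    {S : Type*} [MeasurableSpace S] (ν : Measure S) [IsProbabilityMeasure ν]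
    (σ : S ≃ S) (hσ : MeasurePreserving σ ν ν) (hσinv : MeasurePreserving σ.symm ν ν)
    (herg : Ergodic σ ν)
    (g : S → ℝ → ℝ)
    (hLip : ∀ ω, ∃ L : NNReal, LipschitzOnWith L (g ω) (Icc (0:ℝ) 1))
    (hmaps : ∀ ω, MapsTo (g ω) (Icc (0:ℝ) 1) (Icc (0:ℝ) 1))
    (lam : ℝ) (hlam : lam < 0) (C : S → ℝ) (hCmeas : Measurable C) (hCpos : ∀ ω, 0 < C ω)
    (hdecay : ∀ᵐ ω ∂ν, ∀ n : ℕ, 1 ≤ n →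
      lipSemi (gIter σ g n (σ.symm^[n] ω)) ≤ C ω * Real.exp (lam * n))
    (hbdd : ∃ M : ℝ, ∀ ω, ∀ x ∈ Icc (0:ℝ) 1, |x - g ω x| ≤ M) :
    ∀ᵐ ω ∂ν, ∀ x ∈ Icc (0:ℝ) 1,
      CauchySeq (fun n : ℕ => gIter σ g n (σ.symm^[n] ω) x) := by
  obtain ⟨M, hM⟩ := hbdd
  filter_upwards [hdecay] with ω hω
  intro x hx
  set r : ℝ := Real.exp lam with hr_def
  have hr0 : 0 ≤ r := Real.exp_nonneg _
  have hr1 : r < 1 := Real.exp_lt_one_iff.mpr hlam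
  set K : ℝ := max M (C ω * M) with hK_def
  apply cauchySeq_of_le_geometric r K hr1
  intro n
  -- key rewriting: h (n+1) ω x = gIter n (σ.symm^[n] ω) (g (σ.symm^[n+1] ω) x)
  have hstep : ∀ m : ℕ, gIter σ g (m+1) (σ.symm^[m+1] ω) x
      = gIter σ g m (σ.symm^[m] ω) (g (σ.symm^[m+1] ω) x) := by
    intro m
    show gIter σ g m (σ (σ.symm^[m+1] ω)) _ = _
    congr 1
    rw [Function.iterate_succ_apply', Equiv.apply_symm_apply]
  rcases n with _ | n
  · simp only [pow_zero, mul_one]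
    have : gIter σ g 1 (σ.symm^[1] ω) x = g (σ.symm ω) x := by
      simp [gIter]
    rw [Real.dist_eq]
    show |gIter σ g 0 (σ.symm^[0] ω) x - gIter σ g 1 (σ.symm^[1] ω) x| ≤ K
    rw [this]
    show |x - g (σ.symm ω) x| ≤ K
    exact (hM _ x hx).trans (le_max_left _ _)
  · set m := n + 1 with hm
    have hm1 : 1 ≤ m := Nat.le_add_left 1 n
    set y : ℝ := g (σ.symm^[m+1] ω) x with hy_def
    have hyI : y ∈ Icc (0:ℝ) 1 := hmaps _ hx
    obtain ⟨L, hL⟩ := gIter_lip σ g hLip hmaps m (σ.symm^[m] ω)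
    have hB := hω m hm1
    have key : |gIter σ g m (σ.symm^[m] ω) x - gIter σ g m (σ.symm^[m] ω) y|
        ≤ (C ω * Real.exp (lam * m)) * |x - y| :=
      lipSemi_bound _ L hL _ hB hx hyI
    rw [Real.dist_eq]
    show |gIter σ g m (σ.symm^[m] ω) x - gIter σ g (m+1) (σ.symm^[m+1] ω) x| ≤ K * r ^ m
    rw [hstep m]
    calc |gIter σ g m (σ.symm^[m] ω) x - gIter σ g m (σ.symm^[m] ω) y|
        ≤ (C ω * Real.exp (lam * m)) * |x - y| := key
      _ ≤ (C ω * Real.exp (lam * m)) * M := by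
          apply mul_le_mul_of_nonneg_left _ (mul_nonneg (hCpos ω).le (Real.exp_nonneg _))
          exact hM _ x hx
      _ = (C ω * M) * r ^ m := by
          rw [mul_comm lam (m:ℝ), Real.exp_nat_mul]
          ring
      _ ≤ K * r ^ m := by
          apply mul_le_mul_of_nonneg_right (le_max_right _ _) (by positivity)
end

section
/- Under the hypotheses of the pullback Cauchy lemma, the function γ(ω) := lim_{n→∞} g^n(σ^{-n}ω, 0) is defined for ν-a.e. ω and its graph is invariant: g_ω(γ(ω)) = γ(σω) for ν-a.e. ω. -/
open Set Filter Topology MeasureTheory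

lemma gIter_succ' {S : Type*} (σ : S → S) (g : S → ℝ → ℝ) (n : ℕ) (ω : S) (x : ℝ) :
    gIter σ g (n + 1) ω x = g (σ^[n] ω) (gIter σ g n ω x) := by
  induction n generalizing ω x with
  | zero => rfl
  | succ n ih =>
    show gIter σ g (n + 1) (σ ω) (g ω x) = _
    rw [ih, ← Function.iterate_succ_apply]
    rfl

lemma abs_sub_le_lipSemi (F : ℝ → ℝ) (L : NNReal) (hF : LipschitzOnWith L F (Icc (0:ℝ) 1))
    {x y : ℝ} (hx : x ∈ Icc (0:ℝ) 1) (hy : y ∈ Icc (0:ℝ) 1) :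
    |F x - F y| ≤ lipSemi F * |x - y| := by
  rcases eq_or_ne x y with rfl | h
  · simp
  have hxy : 0 < |x - y| := abs_pos.2 (sub_ne_zero.2 h)
  have hbdd : BddAbove {r : ℝ | ∃ x ∈ Icc (0:ℝ) 1, ∃ y ∈ Icc (0:ℝ) 1,
      x ≠ y ∧ r = |F x - F y| / |x - y|} := by
    refine ⟨L, ?_⟩
    rintro r ⟨a, ha, b, hb, hab, rfl⟩
    have hab' : 0 < |a - b| := abs_pos.2 (sub_ne_zero.2 hab)
    rw [div_le_iff₀ hab']
    have := hF.dist_le_mul a ha b hb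
    simpa [Real.dist_eq] using this
  have hmem : |F x - F y| / |x - y| ∈ {r : ℝ | ∃ x ∈ Icc (0:ℝ) 1, ∃ y ∈ Icc (0:ℝ) 1,
      x ≠ y ∧ r = |F x - F y| / |x - y|} := ⟨x, hx, y, hy, h, rfl⟩
  have hle : |F x - F y| / |x - y| ≤ lipSemi F := le_csSup hbdd hmem
  calc |F x - F y| = |F x - F y| / |x - y| * |x - y| := (div_mul_cancel₀ _ hxy.ne').symm
    _ ≤ lipSemi F * |x - y| := mul_le_mul_of_nonneg_right hle (abs_nonneg _)

/-- Under the hypotheses of the pullback Cauchy lemma (with continuous fiber maps),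
the limit `γ(ω) = lim_n g^n(σ^{-n}ω, 0)` exists for a.e. `ω` and its graph is
invariant: `g_ω(γ(ω)) = γ(σω)` for a.e. `ω`. -/
theorem pullback_limit_invariant_graph
    {S : Type*} [MeasurableSpace S] (ν : Measure S) [IsProbabilityMeasure ν]
    (σ : S ≃ S) (hσ : MeasurePreserving σ ν ν) (hσinv : MeasurePreserving σ.symm ν ν)
    (herg : Ergodic σ ν)
    (g : S → ℝ → ℝ)
    (hcont : ∀ ω, Continuous (g ω))
    (hLip : ∀ ω, ∃ L : NNReal, LipschitzOnWith L (g ω) (Icc (0:ℝ) 1))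
    (hmaps : ∀ ω, MapsTo (g ω) (Icc (0:ℝ) 1) (Icc (0:ℝ) 1))
    (lam : ℝ) (hlam : lam < 0) (C : S → ℝ) (hCmeas : Measurable C) (hCpos : ∀ ω, 0 < C ω)
    (hdecay : ∀ᵐ ω ∂ν, ∀ n : ℕ, 1 ≤ n →
      lipSemi (gIter σ g n (σ.symm^[n] ω)) ≤ C ω * Real.exp (lam * n))
    (hbdd : ∃ M : ℝ, ∀ ω, ∀ x ∈ Icc (0:ℝ) 1, |x - g ω x| ≤ M) :
    ∃ γ : S → ℝ, ∀ᵐ ω ∂ν,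
      Tendsto (fun n : ℕ => gIter σ g n (σ.symm^[n] ω) 0) atTop (𝓝 (γ ω)) ∧
      g ω (γ ω) = γ (σ ω) := by
  classical
  obtain ⟨M, hM⟩ := hbdd
  have h0I : (0:ℝ) ∈ Icc (0:ℝ) 1 := ⟨le_refl _, zero_le_one⟩
  -- iterates are Lipschitz on I
  have hlipI : ∀ n ω, ∃ L : NNReal, LipschitzOnWith L (gIter σ g n ω) (Icc (0:ℝ) 1) := by
    intro n
    induction n with
    | zero =>
      intro ω
      exact ⟨1, by exact (LipschitzWith.id.lipschitzOnWith (s := Icc (0:ℝ) 1))⟩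
    | succ n ih =>
      intro ω
      obtain ⟨L1, h1⟩ := ih (σ ω)
      obtain ⟨L2, h2⟩ := hLip ω
      refine ⟨L1 * L2, ?_⟩
      have := h1.comp h2 (hmaps ω)
      exact this
  -- abbreviation
  set H : ℕ → S → ℝ := fun n ω => gIter σ g n (σ.symm^[n] ω) 0 with hH
  -- step identity: H (n+1) ω = (gIter n at σ⁻ⁿω) applied to g (σ⁻⁽ⁿ⁺¹⁾ω) 0
  have step : ∀ ω n, H (n + 1) ω = gIter σ g n (σ.symm^[n] ω) (g (σ.symm^[n + 1] ω) 0) := by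
    intro ω n
    show gIter σ g n (σ (σ.symm^[n + 1] ω)) (g (σ.symm^[n + 1] ω) 0) = _
    rw [Function.iterate_succ_apply' σ.symm, σ.apply_symm_apply]
  -- key identity: H (n+1) (σ ω) = g ω (H n ω)
  have key : ∀ ω n, H (n + 1) (σ ω) = g ω (H n ω) := by
    intro ω n
    have e1 : (σ.symm)^[n + 1] (σ ω) = (σ.symm)^[n] ω := by
      rw [Function.iterate_succ_apply]
      simp
    show gIter σ g (n + 1) ((σ.symm)^[n + 1] (σ ω)) 0 = _
    rw [e1, gIter_succ']
    have e2 : σ^[n] ((σ.symm)^[n] ω) = ω :=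
      (Function.LeftInverse.iterate σ.apply_symm_apply n) ω
    rw [e2]
  refine ⟨fun ω => limUnder atTop (fun n => H n ω), ?_⟩
  have hconv : ∀ᵐ ω ∂ν, Tendsto (fun n => H n ω) atTop (𝓝 (limUnder atTop (fun n => H n ω))) := by
    filter_upwards [hdecay] with ω hω
    have hcauchy : CauchySeq (fun n => H n ω) := by
      apply cauchySeq_of_le_geometric (Real.exp lam) (max M (C ω * M)) (Real.exp_lt_one_iff.2 hlam)
      intro n
      rcases n with _ | n
      · have : H 0 ω = 0 := rfl
        have h1 : H 1 ω = g (σ.symm ω) 0 := rfl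
        rw [this, h1, Real.dist_eq, pow_zero, mul_one]
        refine le_trans ?_ (le_max_left _ _)
        simpa [abs_sub_comm] using hM (σ.symm ω) 0 h0I
      · -- n+1 ≥ 1 case
        obtain ⟨L, hLF⟩ := hlipI (n + 1) ((σ.symm)^[n + 1] ω)
        have hx : g ((σ.symm)^[n + 2] ω) 0 ∈ Icc (0:ℝ) 1 := hmaps _ h0I
        have hdist : dist (H (n + 1) ω) (H (n + 2) ω)
            ≤ lipSemi (gIter σ g (n + 1) ((σ.symm)^[n + 1] ω)) * |(0:ℝ) - g ((σ.symm)^[n + 2] ω) 0| := by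
          rw [Real.dist_eq, step ω (n + 1)]
          have := abs_sub_le_lipSemi (gIter σ g (n + 1) ((σ.symm)^[n + 1] ω)) L hLF h0I hx
          simpa [hH] using this
        have hls : lipSemi (gIter σ g (n + 1) ((σ.symm)^[n + 1] ω))
            ≤ C ω * Real.exp (lam * (n + 1)) := by
          have := hω (n + 1) (Nat.le_add_left 1 n)
          simpa using this
        have habs : |(0:ℝ) - g ((σ.symm)^[n + 2] ω) 0| ≤ M := hM _ 0 h0I
        have hnn : 0 ≤ C ω * Real.exp (lam * (n + 1)) :=
          mul_nonneg (hCpos ω).le (Real.exp_pos _).le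
        calc dist (H (n + 1) ω) (H (n + 2) ω)
            ≤ (C ω * Real.exp (lam * (n + 1))) * M :=
              hdist.trans (mul_le_mul hls habs (abs_nonneg _) hnn)
          _ = (C ω * M) * Real.exp lam ^ (n + 1) := by
              rw [mul_comm lam ((n : ℝ) + 1)]
              have : ((n : ℝ) + 1) = ((n + 1 : ℕ) : ℝ) := by push_cast; ring
              rw [this, Real.exp_nat_mul]
              ring
          _ ≤ max M (C ω * M) * Real.exp lam ^ (n + 1) :=
              mul_le_mul_of_nonneg_right (le_max_right _ _)
                (pow_nonneg (Real.exp_pos _).le _)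
    exact hcauchy.tendsto_limUnder
  have hσae : Tendsto σ (ae ν) (ae ν) := hσ.quasiMeasurePreserving.tendsto_ae
  filter_upwards [hconv, hσae.eventually hconv] with ω h1 h2
  refine ⟨h1, ?_⟩
  have t1 : Tendsto (fun n => g ω (H n ω)) atTop (𝓝 (g ω (limUnder atTop (fun n => H n ω)))) :=
    ((hcont ω).tendsto _).comp h1
  have t2 : Tendsto (fun n => g ω (H n ω)) atTop (𝓝 (limUnder atTop (fun n => H n (σ ω)))) := by
    have := h2.comp (tendsto_add_atTop_nat 1)
    have e : ((fun n => H n (σ ω)) ∘ fun a => a + 1) = fun n => g ω (H n ω) :=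
      funext fun n => key ω n
    rwa [e] at this
  exact tendsto_nhds_unique t1 t2
end

section
/- Let f₀, f₁ : I → I be continuous maps and B ⊆ I an open interval with closure(B) ⊆ f₀(B) ∪ f₁(B) (covering property). Then for every x ∈ closure(B) there exists a sequence (ω_{−n})_{n≥1} ∈ {0,1}^ℕ such that x ∈ f_{ω_{−1}} ∘ ⋯ ∘ f_{ω_{−n}}(closure(B)) for all n ≥ 1. -/
open Set

/-- `comps f ω B n = f_{ω 1} ∘ ⋯ ∘ f_{ω n} (B)`, the image of `B` under the first `n`
maps labelled by the sequence `ω` (with `ω m` standing for `ω_{−m}`). -/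
def comps (f : Fin 2 → ℝ → ℝ) : (ℕ → Fin 2) → Set ℝ → ℕ → Set ℝ
  | _, B, 0 => B
  | ω, B, n + 1 => f (ω 1) '' comps f (fun m => ω (m + 1)) B n

/-- Covering property: if `f₀, f₁ : I → I` are continuous and `B ⊆ I` is an open
interval with `closure B ⊆ f₀(B) ∪ f₁(B)`, then every `x ∈ closure B` admits a
sequence `(ω_{−n})` of zeros and ones with
`x ∈ f_{ω_{−1}} ∘ ⋯ ∘ f_{ω_{−n}}(closure B)` for all `n ≥ 1`. -/
theorem covering_property_gives_symbolic_sequence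
    (f : Fin 2 → ℝ → ℝ) (hcont : ∀ i, Continuous (f i))
    (hmaps : ∀ i, MapsTo (f i) (Icc (0:ℝ) 1) (Icc (0:ℝ) 1))
    (a b : ℝ) (hab : a < b) (hBI : Ioo a b ⊆ Icc (0:ℝ) 1)
    (hcov : closure (Ioo a b) ⊆ f 0 '' Ioo a b ∪ f 1 '' Ioo a b) :
    ∀ x ∈ closure (Ioo a b), ∃ ω : ℕ → Fin 2,
      ∀ n : ℕ, 1 ≤ n → x ∈ comps f ω (closure (Ioo a b)) n := by
  intro x hx
  have hBC : Ioo a b ⊆ closure (Ioo a b) := subset_closure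
  have step : ∀ z : {z : ℝ // z ∈ closure (Ioo a b)},
      ∃ i : Fin 2, ∃ y : {z : ℝ // z ∈ closure (Ioo a b)}, f i y.1 = z.1 := by
    rintro ⟨z, hz⟩
    rcases hcov hz with ⟨y, hy, hfy⟩ | ⟨y, hy, hfy⟩
    · exact ⟨0, ⟨y, hBC hy⟩, hfy⟩
    · exact ⟨1, ⟨y, hBC hy⟩, hfy⟩
  choose i y hfy using step
  let p : ℕ → {z : ℝ // z ∈ closure (Ioo a b)} :=
    fun n => Nat.rec ⟨x, hx⟩ (fun _ q => y q) n
  have key : ∀ n k, (p k).1 ∈ comps f (fun m => i (p (k + m - 1))) (closure (Ioo a b)) n := by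
    intro n
    induction n with
    | zero => intro k; exact (p k).2
    | succ n ih =>
      intro k
      show (p k).1 ∈ f (i (p (k + 1 - 1))) ''
        comps f (fun m => i (p (k + (m + 1) - 1))) (closure (Ioo a b)) n
      refine ⟨(p (k + 1)).1, ?_, ?_⟩
      · have h := ih (k + 1)
        have hfun : (fun m => i (p (k + 1 + m - 1))) = fun m => i (p (k + (m + 1) - 1)) := by
          funext m
          congr 2
          omega
        rwa [hfun] at h
      · exact hfy (p k)
  exact ⟨fun m => i (p (0 + m - 1)), fun n _ => key n 0⟩
end
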